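/- Let 𝕋 = {z ∈ ℂ : |z| = 1} with normalized Haar probability measure μ. Let φ ∈ L²(ℝ) be a measurable function satisfying ∑_{k ∈ ℤ} |φ(x + k)|² = 1 for almost every x ∈ ℝ, and for n ∈ ℕ define R_n : L²(𝕋, μ) → L²(ℝ) by (R_n ξ)(x) = 2^{−n/2} ξ(e^{2πi·2^{−n} x}) φ(2^{−n} x). Then: (1) each R_n is a well-defined linear isometry; and (2) if in addition m₁ : 𝕋 → ℂ is a bounded measurable function with |m₁(z)|² + |m₁(−z)|² = 2 a.e. and φ(2x) = 2^{−1/2} m₁(e^{2πix}) φ(x) for almost every x ∈ ℝ, then R_{n+1} ∘ S₁ = R_n for all n ∈ ℕ, where (S₁ξ)(z) = m₁(z)·ξ(z²). -/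

import Mathlib

open MeasureTheory

/-- The normalized Haar (arc-length) probability measure on the unit circle,
realized as a measure on `ℂ`. -/
noncomputable def haarCircle : Measure ℂ :=
  Measure.map (fun t : ℝ => Complex.exp (2 * Real.pi * Complex.I * t))
    (volume.restrict (Set.Ioc (0 : ℝ) 1))

open scoped ENNReal NNReal

noncomputable def PP (t : ℝ) : ℂ := Complex.exp (2 * Real.pi * Complex.I * t)

lemma measurable_PP : Measurable PP := by
  unfold PP; fun_prop

lemma haarCircle_eq : haarCircle = Measure.map PP (volume.restrict (Set.Ioc (0:ℝ) 1)) := rfl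

lemma PP_per (x : ℝ) (k : ℤ) : PP (x + k) = PP x := by
  unfold PP
  push_cast
  rw [mul_add, Complex.exp_add,
    show 2 * (Real.pi:ℂ) * Complex.I * k = k * (2 * Real.pi * Complex.I) by ring,
    Complex.exp_int_mul_two_pi_mul_I, mul_one]

lemma PP_sq (t : ℝ) : PP t ^ 2 = PP (2 * t) := by
  unfold PP
  rw [sq, ← Complex.exp_add]
  push_cast
  ring_nf

noncomputable def eZ : ℤ ≃ AddSubgroup.zmultiples (1:ℝ) :=
  Equiv.ofBijective
    (fun k : ℤ => ⟨(k:ℝ), by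
      rw [AddSubgroup.mem_zmultiples_iff]; exact ⟨k, by simp⟩⟩)
    ⟨fun a b h => by simpa using Subtype.ext_iff.mp h,
     fun p => by
      obtain ⟨x, hx⟩ := p
      rw [AddSubgroup.mem_zmultiples_iff] at hx
      obtain ⟨k, hk⟩ := hx
      exact ⟨k, by simp [← hk]⟩⟩

lemma lintegral_eq_tsum_Ioc (f : ℝ → ℝ≥0∞) :
    ∫⁻ x, f x ∂(volume : Measure ℝ)
      = ∑' k : ℤ, ∫⁻ x in Set.Ioc (0:ℝ) 1, f ((k:ℝ) + x) ∂volume := by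
  have h := (isAddFundamentalDomain_Ioc one_pos 0 volume).lintegral_eq_tsum'' f
  rw [h, ← eZ.tsum_eq]
  norm_num [eZ]
  rfl

lemma qmp_PP : Measure.QuasiMeasurePreserving PP volume haarCircle := by
  refine ⟨measurable_PP, Measure.AbsolutelyContinuous.mk fun N hN h0 => ?_⟩
  rw [Measure.map_apply measurable_PP hN]
  have hA : MeasurableSet (PP ⁻¹' N) := measurable_PP hN
  have : volume (PP ⁻¹' N) = ∫⁻ x, (PP ⁻¹' N).indicator 1 x ∂volume := by
    rw [lintegral_indicator hA]; simp
  rw [this, lintegral_eq_tsum_Ioc]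
  have hterm : ∀ k : ℤ, ∫⁻ x in Set.Ioc (0:ℝ) 1, (PP ⁻¹' N).indicator 1 ((k:ℝ) + x) ∂volume = 0 := by
    intro k
    have heq : ∀ x : ℝ, (PP ⁻¹' N).indicator (1 : ℝ → ℝ≥0∞) ((k:ℝ) + x)
        = (PP ⁻¹' N).indicator 1 x := by
      intro x
      have : ((k:ℝ) + x ∈ PP ⁻¹' N) = (x ∈ PP ⁻¹' N) := by
        simp only [Set.mem_preimage, add_comm (k:ℝ) x, PP_per]
      by_cases hx : x ∈ PP ⁻¹' N <;> simp_all [Set.indicator_apply]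
    simp only [heq]
    rw [lintegral_indicator hA]
    simp only [Pi.one_apply, lintegral_const, one_mul]
    have : (volume.restrict (Set.Ioc (0:ℝ) 1)) (PP ⁻¹' N) = haarCircle N := by
      rw [haarCircle_eq, Measure.map_apply measurable_PP hN]
    rw [Measure.restrict_apply_univ, this, h0]
  simp [hterm]

lemma qmp_scale (a : ℝ) (ha : a ≠ 0) :
    Measure.QuasiMeasurePreserving (fun x : ℝ => a * x) volume volume := by
  refine ⟨measurable_const_mul a, ?_⟩
  rw [Real.map_volume_mul_left ha]
  exact Measure.AbsolutelyContinuous.mk fun s _ hs => by simp [hs]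

lemma qmp_div (n : ℕ) :
    Measure.QuasiMeasurePreserving (fun x : ℝ => x / 2 ^ n) volume volume := by
  have := qmp_scale ((2:ℝ)^n)⁻¹ (by positivity)
  simpa [div_eq_inv_mul] using this

lemma ae_div (n : ℕ) {q : ℝ → Prop} (h : ∀ᵐ x ∂(volume : Measure ℝ), q x) :
    ∀ᵐ x ∂(volume : Measure ℝ), q (x / 2 ^ n) := (qmp_div n).ae h

lemma ae_PP_div (n : ℕ) {q : ℂ → Prop} (h : ∀ᵐ z ∂haarCircle, q z) :
    ∀ᵐ x ∂(volume : Measure ℝ), q (PP (x / 2 ^ n)) :=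
  (qmp_PP.comp (qmp_div n)).ae h

lemma lintegral_div_eq (n : ℕ) (g : ℝ → ℝ≥0∞) (hg : Measurable g) :
    ∫⁻ x, g (x / 2 ^ n) ∂(volume : Measure ℝ) = (2:ℝ≥0∞) ^ n * ∫⁻ x, g x ∂volume := by
  have h1 : ∫⁻ x, g (((2:ℝ)^n)⁻¹ * x) ∂(volume : Measure ℝ)
      = ∫⁻ y, g y ∂(Measure.map (fun x : ℝ => ((2:ℝ)^n)⁻¹ * x) volume) := by
    rw [lintegral_map hg (measurable_const_mul _)]
  rw [show (fun x : ℝ => g (x / 2 ^ n)) = fun x => g (((2:ℝ)^n)⁻¹ * x) by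
    funext x; rw [div_eq_inv_mul]]
  rw [h1, Real.map_volume_mul_left (by positivity : ((2:ℝ)^n)⁻¹ ≠ 0)]
  rw [lintegral_smul_measure]
  congr 1
  rw [inv_inv, abs_of_pos (by positivity), ENNReal.ofReal_pow (by norm_num)]
  norm_num

lemma sum_nnnorm_eq_one {φ : ℝ → ℂ}
    (hφsum : ∀ᵐ x : ℝ ∂volume, ∑' k : ℤ, ‖φ (x + k)‖ ^ 2 = 1) :
    ∀ᵐ x : ℝ ∂volume, ∑' k : ℤ, ((‖φ (x + k)‖₊ : ℝ≥0∞)) ^ 2 = 1 := by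
  filter_upwards [hφsum] with x hx
  have hs : Summable (fun k : ℤ => ‖φ (x + k)‖ ^ 2) := by
    by_contra hc
    rw [tsum_eq_zero_of_not_summable hc] at hx
    norm_num at hx
  have h1 : ∀ k : ℤ, ((‖φ (x + k)‖₊ : ℝ≥0∞)) ^ 2
      = ENNReal.ofReal (‖φ (x + k)‖ ^ 2) := by
    intro k
    rw [ENNReal.ofReal_pow (norm_nonneg _)]
    congr 1
    rw [ofReal_norm, enorm_eq_nnnorm]
  simp only [h1]
  rw [← ENNReal.ofReal_tsum_of_nonneg (fun k => by positivity) hs, hx]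
  simp

lemma keyA {φ : ℝ → ℂ} (hφmeas : Measurable φ)
    (hφsum : ∀ᵐ x : ℝ ∂volume, ∑' k : ℤ, ‖φ (x + k)‖ ^ 2 = 1)
    (f : ℂ → ℝ≥0∞) (hf : Measurable f) :
    ∫⁻ x, f (PP x) * ((‖φ x‖₊ : ℝ≥0∞)) ^ 2 ∂(volume : Measure ℝ)
      = ∫⁻ z, f z ∂haarCircle := by
  have hmeas : Measurable fun x : ℝ => f (PP x) * ((‖φ x‖₊ : ℝ≥0∞)) ^ 2 := by
    apply (hf.comp measurable_PP).mul
    exact (hφmeas.nnnorm.coe_nnreal_ennreal).pow_const 2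
  rw [lintegral_eq_tsum_Ioc]
  have hterm : ∀ k : ℤ, ∫⁻ x in Set.Ioc (0:ℝ) 1, f (PP ((k:ℝ) + x)) * ((‖φ ((k:ℝ) + x)‖₊ : ℝ≥0∞)) ^ 2 ∂volume
      = ∫⁻ x in Set.Ioc (0:ℝ) 1, f (PP x) * ((‖φ (x + (k:ℝ))‖₊ : ℝ≥0∞)) ^ 2 ∂volume := by
    intro k
    apply lintegral_congr
    intro x
    rw [add_comm (k:ℝ) x, PP_per]
  simp only [hterm]
  rw [← lintegral_tsum (fun k : ℤ => by
    apply Measurable.aemeasurable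
    exact (hf.comp measurable_PP).mul
      (((hφmeas.comp (measurable_add_const _)).nnnorm.coe_nnreal_ennreal).pow_const 2))]
  have hsum := sum_nnnorm_eq_one hφsum
  have hae : ∀ᵐ x ∂(volume.restrict (Set.Ioc (0:ℝ) 1)),
      (∑' k : ℤ, f (PP x) * ((‖φ (x + (k:ℝ))‖₊ : ℝ≥0∞)) ^ 2) = f (PP x) := by
    filter_upwards [ae_restrict_of_ae hsum] with x hx
    rw [ENNReal.tsum_mul_left, hx, mul_one]
  rw [lintegral_congr_ae hae, haarCircle_eq, lintegral_map hf measurable_PP]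

noncomputable def cC (n : ℕ) : ℂ := (((2 : ℝ) ^ (-(n : ℝ) / 2) : ℝ) : ℂ)

noncomputable def Ffun (φ : ℝ → ℂ) (n : ℕ) (f : ℂ → ℂ) : ℝ → ℂ := fun x : ℝ =>
  (((2 : ℝ) ^ (-(n : ℝ) / 2) : ℝ) : ℂ) *
    f (Complex.exp (2 * Real.pi * Complex.I * ((x / 2 ^ n : ℝ) : ℂ))) *
    φ (x / 2 ^ n)

lemma Ffun_eq (φ : ℝ → ℂ) (n : ℕ) (f : ℂ → ℂ) :
    Ffun φ n f = fun x : ℝ => cC n * f (PP (x / 2 ^ n)) * φ (x / 2 ^ n) := rfl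

lemma cC_sq : ∀ n : ℕ, ENNReal.ofReal (((2:ℝ) ^ (-(n:ℝ)/2)) ^ 2) * (2:ℝ≥0∞) ^ n = 1 := by
  intro n
  have h1 : ((2:ℝ) ^ (-(n:ℝ)/2)) ^ 2 = ((2:ℝ)^n)⁻¹ := by
    rw [← Real.rpow_natCast ((2:ℝ) ^ (-(n:ℝ)/2)) 2, ← Real.rpow_mul (by norm_num)]
    rw [show (-(n:ℝ)/2) * (2:ℕ) = -(n:ℝ) by push_cast; ring]
    rw [Real.rpow_neg (by norm_num), Real.rpow_natCast]
  rw [h1, ENNReal.ofReal_inv_of_pos (by positivity), ENNReal.ofReal_pow (by norm_num)]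
  rw [ENNReal.ofReal_ofNat]
  exact ENNReal.inv_mul_cancel (pow_ne_zero n (by norm_num)) (ENNReal.pow_ne_top ENNReal.ofNat_ne_top)

lemma key_lintegral {φ : ℝ → ℂ} (hφmeas : Measurable φ)
    (hφsum : ∀ᵐ x : ℝ ∂volume, ∑' k : ℤ, ‖φ (x + k)‖ ^ 2 = 1)
    (n : ℕ) (f : ℂ → ℂ) (hf : Measurable f) :
    ∫⁻ x, ((‖Ffun φ n f x‖₊ : ℝ≥0∞)) ^ 2 ∂(volume : Measure ℝ)
      = ∫⁻ z, ((‖f z‖₊ : ℝ≥0∞)) ^ 2 ∂haarCircle := by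
  have hpt : ∀ x : ℝ, ((‖Ffun φ n f x‖₊ : ℝ≥0∞)) ^ 2
      = ENNReal.ofReal (((2:ℝ) ^ (-(n:ℝ)/2)) ^ 2) *
        (((‖f (PP (x / 2 ^ n))‖₊ : ℝ≥0∞)) ^ 2 * ((‖φ (x / 2 ^ n)‖₊ : ℝ≥0∞)) ^ 2) := by
    intro x
    rw [Ffun_eq]
    have hc : (‖cC n‖₊ : ℝ≥0∞) = ENNReal.ofReal ((2:ℝ) ^ (-(n:ℝ)/2)) := by
      rw [← enorm_eq_nnnorm, ← ofReal_norm, cC, Complex.norm_real, Real.norm_eq_abs,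
        abs_of_pos (by positivity)]
    simp only [nnnorm_mul, ENNReal.coe_mul, hc, ENNReal.ofReal_pow (by positivity : (0:ℝ) ≤ (2:ℝ) ^ (-(n:ℝ)/2))]
    ring
  simp only [hpt]
  rw [lintegral_const_mul _ (by
    apply Measurable.fun_mul
    · exact ((hf.comp (measurable_PP.comp (measurable_id.div_const _))).nnnorm.coe_nnreal_ennreal).pow_const 2
    · exact ((hφmeas.comp (measurable_id.div_const _)).nnnorm.coe_nnreal_ennreal).pow_const 2)]
  have hg : Measurable (fun y : ℝ => ((‖f (PP y)‖₊ : ℝ≥0∞)) ^ 2 * ((‖φ y‖₊ : ℝ≥0∞)) ^ 2) := by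
    apply Measurable.fun_mul
    · exact ((hf.comp measurable_PP).nnnorm.coe_nnreal_ennreal).pow_const 2
    · exact (hφmeas.nnnorm.coe_nnreal_ennreal).pow_const 2
  have hdiv := lintegral_div_eq n _ hg
  rw [hdiv, keyA hφmeas hφsum (fun z => ((‖f z‖₊ : ℝ≥0∞)) ^ 2)
    ((hf.nnnorm.coe_nnreal_ennreal).pow_const 2)]
  rw [← mul_assoc, cC_sq n, one_mul]

lemma key_eLpNorm {φ : ℝ → ℂ} (hφmeas : Measurable φ)
    (hφsum : ∀ᵐ x : ℝ ∂volume, ∑' k : ℤ, ‖φ (x + k)‖ ^ 2 = 1)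
    (n : ℕ) (f : ℂ → ℂ) (hf : Measurable f) :
    eLpNorm (Ffun φ n f) 2 (volume : Measure ℝ) = eLpNorm f 2 haarCircle := by
  rw [eLpNorm_eq_lintegral_rpow_enorm_toReal two_ne_zero ENNReal.ofNat_ne_top,
    eLpNorm_eq_lintegral_rpow_enorm_toReal two_ne_zero ENNReal.ofNat_ne_top]
  congr 1
  have h2 : ((2:ℝ≥0∞)).toReal = (2:ℝ) := by simp
  simp only [h2]
  have hrx : ∀ (a : ℝ≥0∞), a ^ (2:ℝ) = a ^ (2:ℕ) := fun a => by
    rw [← ENNReal.rpow_natCast a 2]; norm_num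
  simp only [hrx]
  exact key_lintegral hφmeas hφsum n f hf

lemma measurable_Ffun {φ : ℝ → ℂ} (hφmeas : Measurable φ) (n : ℕ) {f : ℂ → ℂ}
    (hf : Measurable f) : Measurable (Ffun φ n f) := by
  rw [Ffun_eq]
  apply Measurable.mul
  · exact measurable_const.mul (hf.comp (measurable_PP.comp (measurable_id.div_const _)))
  · exact hφmeas.comp (measurable_id.div_const _)

lemma Ffun_congr {φ : ℝ → ℂ} (n : ℕ) {f g : ℂ → ℂ} (h : f =ᵐ[haarCircle] g) :
    Ffun φ n f =ᵐ[volume] Ffun φ n g := by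
  filter_upwards [ae_PP_div n h] with x hx
  rw [Ffun_eq, Ffun_eq]
  simp only [hx]

lemma eLpNorm_Ffun_Lp {φ : ℝ → ℂ} (hφmeas : Measurable φ)
    (hφsum : ∀ᵐ x : ℝ ∂volume, ∑' k : ℤ, ‖φ (x + k)‖ ^ 2 = 1)
    (n : ℕ) (ξ : Lp ℂ 2 haarCircle) :
    eLpNorm (Ffun φ n ⇑ξ) 2 (volume : Measure ℝ) = eLpNorm (⇑ξ) 2 haarCircle := by
  set f₀ := (Lp.aestronglyMeasurable ξ).mk ⇑ξ with hf₀
  have hmk : ⇑ξ =ᵐ[haarCircle] f₀ := (Lp.aestronglyMeasurable ξ).ae_eq_mk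
  have hf₀m : Measurable f₀ := (Lp.aestronglyMeasurable ξ).measurable_mk
  rw [eLpNorm_congr_ae (Ffun_congr n hmk), key_eLpNorm hφmeas hφsum n f₀ hf₀m,
    ← eLpNorm_congr_ae hmk]

lemma memLp_Ffun {φ : ℝ → ℂ} (hφmeas : Measurable φ)
    (hφsum : ∀ᵐ x : ℝ ∂volume, ∑' k : ℤ, ‖φ (x + k)‖ ^ 2 = 1)
    (n : ℕ) (ξ : Lp ℂ 2 haarCircle) :
    MemLp (Ffun φ n ⇑ξ) 2 (volume : Measure ℝ) := by
  have hmk : ⇑ξ =ᵐ[haarCircle] (Lp.aestronglyMeasurable ξ).mk ⇑ξ :=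
    (Lp.aestronglyMeasurable ξ).ae_eq_mk
  refine ⟨?_, ?_⟩
  · exact ((measurable_Ffun hφmeas n
      (Lp.aestronglyMeasurable ξ).measurable_mk).aestronglyMeasurable).congr
      (Ffun_congr n hmk).symm
  · rw [eLpNorm_Ffun_Lp hφmeas hφsum n ξ]
    exact Lp.eLpNorm_lt_top ξ

lemma cC_succ (n : ℕ) : cC (n + 1) = cC n * ((Real.sqrt 2 : ℂ))⁻¹ := by
  have hr : (2:ℝ) ^ (-((n:ℕ)+1:ℕ) / 2 : ℝ) = (2:ℝ) ^ (-(n:ℝ)/2) * (Real.sqrt 2)⁻¹ := by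
    rw [show Real.sqrt 2 = (2:ℝ) ^ ((1:ℝ)/2) from Real.sqrt_eq_rpow 2,
      ← Real.rpow_neg_one ((2:ℝ) ^ ((1:ℝ)/2)), ← Real.rpow_mul (by norm_num),
      ← Real.rpow_add (by norm_num)]
    congr 1
    push_cast
    ring
  have h2 := congrArg (fun r : ℝ => (r : ℂ)) hr
  rw [Complex.ofReal_mul, Complex.ofReal_inv] at h2
  exact h2

/-- If `φ ∈ L²(ℝ)` satisfies `∑_{k∈ℤ} |φ(x+k)|² = 1` a.e., then the maps
`(R_n ξ)(x) = 2^{−n/2} ξ(e^{2πi 2^{−n} x}) φ(2^{−n} x)` are well-defined linear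
isometries `L²(𝕋, μ) → L²(ℝ)`, and if moreover `|m₁(z)|² + |m₁(−z)|² = 2` a.e. and
`φ(2x) = 2^{−1/2} m₁(e^{2πix}) φ(x)` a.e., then `R_{n+1} ∘ S₁ = R_n` where
`(S₁ ξ)(z) = m₁(z) ξ(z²)`. -/
theorem stmt12 (φ : ℝ → ℂ) (hφmeas : Measurable φ)
    (hφ2 : MemLp φ 2 (volume : Measure ℝ))
    (hφsum : ∀ᵐ x : ℝ ∂volume, ∑' k : ℤ, ‖φ (x + k)‖ ^ 2 = 1) :
    ∃ R : ℕ → (Lp ℂ 2 haarCircle →ₗ[ℂ] Lp ℂ 2 (volume : Measure ℝ)),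
      (∀ (n : ℕ) (ξ : Lp ℂ 2 haarCircle),
        ⇑(R n ξ) =ᵐ[volume] fun x : ℝ =>
          (((2 : ℝ) ^ (-(n : ℝ) / 2) : ℝ) : ℂ) *
            ξ (Complex.exp (2 * Real.pi * Complex.I * ((x / 2 ^ n : ℝ) : ℂ))) *
            φ (x / 2 ^ n)) ∧
      (∀ (n : ℕ) (ξ : Lp ℂ 2 haarCircle), ‖R n ξ‖ = ‖ξ‖) ∧
      (∀ (m₁ : ℂ → ℂ), Measurable m₁ →
        (∃ C : ℝ, ∀ᵐ z ∂haarCircle, ‖m₁ z‖ ≤ C) →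
        (∀ᵐ z ∂haarCircle,
          ‖m₁ z‖ ^ 2 + ‖m₁ (-z)‖ ^ 2 = 2) →
        (∀ᵐ x : ℝ ∂volume, φ (2 * x) =
          (Real.sqrt 2 : ℂ)⁻¹ *
            m₁ (Complex.exp (2 * Real.pi * Complex.I * (x : ℂ))) * φ x) →
        ∀ S₁ : Lp ℂ 2 haarCircle →ₗ[ℂ] Lp ℂ 2 haarCircle,
          (∀ ξ : Lp ℂ 2 haarCircle,
            ⇑(S₁ ξ) =ᵐ[haarCircle] fun z => m₁ z * ξ (z ^ 2)) →
          ∀ n : ℕ, (R (n + 1)).comp S₁ = R n) := by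
  have memF : ∀ (n : ℕ) (ξ : Lp ℂ 2 haarCircle),
      MemLp (Ffun φ n ⇑ξ) 2 (volume : Measure ℝ) := memLp_Ffun hφmeas hφsum
  refine ⟨fun n =>
    { toFun := fun ξ => (memF n ξ).toLp (Ffun φ n ⇑ξ)
      map_add' := ?_
      map_smul' := ?_ }, ?_, ?_, ?_⟩
  · intro ξ η
    have h3 : Ffun φ n ⇑(ξ + η) =ᵐ[volume] Ffun φ n ⇑ξ + Ffun φ n ⇑η :=
      (Ffun_congr n (Lp.coeFn_add ξ η)).trans (Filter.EventuallyEq.of_eq (by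
        funext x
        simp only [Ffun_eq, Pi.add_apply]
        ring))
    exact (MemLp.toLp_congr _ ((memF n ξ).add (memF n η)) h3).trans
      (MemLp.toLp_add _ _)
  · intro c ξ
    have h3 : Ffun φ n ⇑(c • ξ) =ᵐ[volume] c • Ffun φ n ⇑ξ :=
      (Ffun_congr n (Lp.coeFn_smul c ξ)).trans (Filter.EventuallyEq.of_eq (by
        funext x
        simp only [Ffun_eq, Pi.smul_apply, smul_eq_mul]
        ring))
    simp only [RingHom.id_apply]
    exact (MemLp.toLp_congr _ ((memF n ξ).const_smul c) h3).trans
      (MemLp.toLp_const_smul c _)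
  · intro n ξ
    exact MemLp.coeFn_toLp (memF n ξ)
  · intro n ξ
    simp only [LinearMap.coe_mk, AddHom.coe_mk]
    rw [Lp.norm_toLp, eLpNorm_Ffun_Lp hφmeas hφsum, Lp.norm_def]
  · intro m₁ hm₁ _ _ hsc S₁ hS₁ n
    apply LinearMap.ext
    intro ξ
    simp only [LinearMap.comp_apply, LinearMap.coe_mk, AddHom.coe_mk]
    apply MemLp.toLp_congr
    have h1 : ∀ᵐ x ∂(volume : Measure ℝ),
        (S₁ ξ) (PP (x / 2 ^ (n + 1)))
          = m₁ (PP (x / 2 ^ (n + 1))) * ξ ((PP (x / 2 ^ (n + 1))) ^ 2) :=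
      ae_PP_div (n + 1) (hS₁ ξ)
    have h2 : ∀ᵐ x ∂(volume : Measure ℝ),
        φ (2 * (x / 2 ^ (n + 1)))
          = (Real.sqrt 2 : ℂ)⁻¹ * m₁ (PP (x / 2 ^ (n + 1))) * φ (x / 2 ^ (n + 1)) :=
      ae_div (n + 1) hsc
    filter_upwards [h1, h2] with x hx1 hx2
    have hxx : (2:ℝ) * (x / 2 ^ (n + 1)) = x / 2 ^ n := by
      rw [pow_succ]
      field_simp
    rw [Ffun_eq, Ffun_eq]
    simp only
    rw [hx1, show PP (x / 2 ^ n) = PP (x / 2 ^ (n+1)) ^ 2 by rw [PP_sq, hxx],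
      show φ (x / 2 ^ n) = φ (2 * (x / 2 ^ (n+1))) by rw [hxx], hx2]
    rw [cC_succ]
    ring
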